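/- Let $A$ be an integral domain and $R = A[x,y]$ the polynomial ring in two variables. For a prime power $q \geq 2$, the colon ideal $(x^{q-1}, y^{q-1}) :_R (x-y)$ is generated by $y^{q-1}$ and $\gamma = x^{q-2} + x^{q-3}y + \cdots + xy^{q-3} + y^{q-2}$. -/

import Mathlib

open MvPolynomial

/-- Over a domain `A`, in `R = A[x,y]`, the colon ideal `(x^(q-1), y^(q-1)) : (x-y)`
is generated by `y^(q-1)` and `γ = ∑_{i=0}^{q-2} x^i y^(q-2-i)`. -/
theorem stmt_0 (A : Type*) [CommRing A] [IsDomain A] (q : ℕ) (hq : 2 ≤ q) :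
    (Ideal.span {(X 0 : MvPolynomial (Fin 2) A) ^ (q - 1), X 1 ^ (q - 1)}).colon
        ((Ideal.span {X 0 - X 1} : Ideal (MvPolynomial (Fin 2) A)) : Set (MvPolynomial (Fin 2) A)) =
      Ideal.span {(X 1 : MvPolynomial (Fin 2) A) ^ (q - 1),
        ∑ i ∈ Finset.range (q - 1), X 0 ^ i * X 1 ^ (q - 2 - i)} := by
  set x : MvPolynomial (Fin 2) A := X 0 with hxdef
  set y : MvPolynomial (Fin 2) A := X 1 with hydef
  set γ : MvPolynomial (Fin 2) A :=
    ∑ i ∈ Finset.range (q - 1), x ^ i * y ^ (q - 2 - i) with hγdef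
  -- the key telescoping identity
  have hγ : γ * (x - y) = x ^ (q - 1) - y ^ (q - 1) := by
    have h := geom_sum₂_mul x y (q - 1)
    rw [← h, hγdef]
    congr 1
  -- X 0 is prime
  have hxprime : Prime x := by
    refine (MulEquiv.prime_iff (p := x) (finSuccEquiv A 1).toRingEquiv.toMulEquiv).mp ?_
    show Prime ((finSuccEquiv A 1) x)
    rw [hxdef, finSuccEquiv_X_zero]
    exact Polynomial.prime_X
  -- X 0 does not divide X 1 ^ (q-1)
  have hndvd : ¬ x ∣ y ^ (q - 1) := by
    rintro ⟨d, hd⟩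
    have := congrArg (eval (fun i : Fin 2 => if i = 0 then (0 : A) else 1)) hd
    simp [hxdef, hydef] at this
  refine le_antisymm ?_ ?_
  · -- colon ≤ span
    intro g hg
    rw [Ideal.mem_colon_span_singleton] at hg
    rw [Ideal.mem_span_pair] at hg
    obtain ⟨a, b, hab⟩ := hg
    -- x^(q-1) ∣ (g + b*γ)
    have hdvd : x ^ (q - 1) ∣ (g + b * γ) * y ^ (q - 1) :=
      ⟨g - a * γ, by linear_combination g * hγ + γ * hab⟩
    obtain ⟨c, hc⟩ := hxprime.pow_dvd_of_dvd_mul_right (q - 1) hndvd hdvd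
    rw [Ideal.mem_span_pair]
    exact ⟨c, c * (x - y) - b, by linear_combination c * hγ - hc⟩
  · -- span ≤ colon
    rw [Ideal.span_le]
    rintro z hz
    simp only [Set.mem_insert_iff, Set.mem_singleton_iff] at hz
    have hxI : x ^ (q - 1) ∈ Ideal.span {x ^ (q - 1), y ^ (q - 1)} :=
      Ideal.subset_span (by simp)
    have hyI : y ^ (q - 1) ∈ Ideal.span {x ^ (q - 1), y ^ (q - 1)} :=
      Ideal.subset_span (by simp)
    rcases hz with rfl | rfl
    · show y ^ (q - 1) ∈ _
      rw [SetLike.mem_coe, Ideal.mem_colon_span_singleton]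
      rw [mul_comm]
      exact Ideal.mul_mem_left _ _ hyI
    · show γ ∈ _
      rw [SetLike.mem_coe, Ideal.mem_colon_span_singleton, hγ]
      exact Ideal.sub_mem _ hxI hyI
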